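/- Let k ≥ 2 and let 0 < α₁ < α₂ < ⋯ < α_k be integers with gcd(α₁,…,α_k) = 1, and assume that αᵢ ≢ αⱼ (mod α₁) for all 1 ≤ i < j ≤ k. Then for every 1 ≤ i ≤ α_k − 1, δ(ω(i)) ≤ 1 + ⌊(2·α_k·⌊α₁/k⌋ + λ_max)/α₁⌋, and this quantity is at most 1 + 2α_k/k + λ_max/α₁ (as rational numbers). -/

import Mathlib

open Finset Pointwise

section EGAbstract

variable {M : Type*} [AddCommGroup M] [Fintype M] [DecidableEq M]

/-- The Dyson e-transform iteration core. -/
lemma dyson_core : ∀ (n : ℕ) (B A : Finset M), B.card ≤ n → A.Nonempty → (0:M) ∈ B →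
    ∃ A' B' : Finset M, A' + B' ⊆ A + B ∧ A.card + B.card ≤ A'.card + B'.card ∧
      B' ⊆ B ∧ (0:M) ∈ B' ∧ A'.Nonempty ∧ A ⊆ A' ∧
      (B'.card = 1 ∨ ∀ b ∈ B', ∀ a ∈ A', a + b ∈ A') := by
  intro n
  induction n with
  | zero => intro B A hB hA h0; simp at hB; simp [hB] at h0
  | succ n ih =>
    intro B A hB hA h0
    by_cases hstuck : ∀ t ∈ A, ∀ b ∈ B, t + b ∈ A
    · exact ⟨A, B, by
        intro x hx
        obtain ⟨a, ha, b, hb, rfl⟩ := Finset.mem_add.1 hx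
        exact Finset.add_mem_add ha hb, le_rfl, Finset.Subset.rfl, h0, hA, Finset.Subset.rfl,
        Or.inr fun b hb a ha => hstuck a ha b hb⟩
    · push_neg at hstuck
      obtain ⟨t, ht, b₀, hb₀, hnb⟩ := hstuck
      -- transform
      set A1 : Finset M := A ∪ B.image (t + ·) with hA1
      set B1 : Finset M := B.filter (fun b => t + b ∈ A) with hB1
      have hB1card : B1.card < B.card := by
        apply Finset.card_lt_card
        refine ⟨Finset.filter_subset _ _, fun hsub => ?_⟩
        have := hsub hb₀
        rw [hB1, Finset.mem_filter] at this
        exact hnb this.2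
      have hsum : A1 + B1 ⊆ A + B := by
        intro x hx
        obtain ⟨a, ha, b, hb, rfl⟩ := Finset.mem_add.1 hx
        rw [hB1, Finset.mem_filter] at hb
        rw [hA1, Finset.mem_union] at ha
        rcases ha with ha | ha
        · exact Finset.add_mem_add ha hb.1
        · obtain ⟨c, hc, rfl⟩ := Finset.mem_image.1 ha
          have : t + c + b = (t + b) + c := by abel
          rw [this]
          exact Finset.add_mem_add hb.2 hc
      have hcards : A.card + B.card ≤ A1.card + B1.card := by
        have h1 : A1.card = A.card + (B.image (t + ·)).card - (A ∩ B.image (t + ·)).card := by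
          rw [hA1, ← Finset.card_union_add_card_inter]; omega
        have h2 : (B.image (t + ·)).card = B.card :=
          Finset.card_image_of_injective _ (add_right_injective t)
        have h3 : B1.card = (A ∩ B.image (t + ·)).card := by
          rw [hB1]
          apply Finset.card_bij (fun b _ => t + b)
          · intro b hb
            rw [Finset.mem_filter] at hb
            exact Finset.mem_inter.2 ⟨hb.2, Finset.mem_image_of_mem _ hb.1⟩
          · intro a ha b hb hab
            exact add_right_injective t hab
          · intro c hc
            rw [Finset.mem_inter] at hc
            obtain ⟨b, hb, rfl⟩ := Finset.mem_image.1 hc.2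
            exact ⟨b, Finset.mem_filter.2 ⟨hb, hc.1⟩, rfl⟩
        have h4 : (A ∩ B.image (t + ·)).card ≤ (B.image (t + ·)).card :=
          Finset.card_le_card (Finset.inter_subset_right)
        omega
      have h0B1 : (0:M) ∈ B1 := by
        rw [hB1, Finset.mem_filter]
        exact ⟨h0, by simpa using ht⟩
      obtain ⟨A', B', hs, hc, hsub, h0', hne, hAsub, hfin⟩ :=
        ih B1 A1 (by omega) (hA.mono Finset.subset_union_left) h0B1
      exact ⟨A', B', hs.trans hsum, by omega, hsub.trans (Finset.filter_subset _ _), h0', hne,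
        (Finset.subset_union_left).trans hAsub, hfin⟩


/-- stabilizer of a finset, as a subgroup -/
def stabSub (W : Finset M) : AddSubgroup M where
  carrier := {x | ∀ w ∈ W, w + x ∈ W}
  zero_mem' := by intro w hw; simpa using hw
  add_mem' := by
    intro x y hx hy w hw
    rw [← add_assoc]
    exact hy _ (hx _ hw)
  neg_mem' := by
    intro x hx
    -- the map w ↦ w + x is an injection W → W, hence surjection
    have hinj : Set.InjOn (· + x) W := fun a _ b _ h => by
      exact add_right_cancel h
    have himage : W.image (· + x) = W := by
      apply Finset.eq_of_subset_of_card_le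
      · intro w hw
        obtain ⟨a, ha, rfl⟩ := Finset.mem_image.1 hw
        exact hx _ ha
      · rw [Finset.card_image_of_injOn (by simpa using hinj)]
    intro w hw
    rw [← himage] at hw
    obtain ⟨a, ha, hax⟩ := Finset.mem_image.1 hw
    have : w + -x = a := by rw [← hax]; abel
    rwa [this]

lemma stab_mem_iff (W : Finset M) (x : M) : x ∈ stabSub W ↔ ∀ w ∈ W, w + x ∈ W := Iff.rfl

/-- if the stabilizer is everything and W is nonempty, W is univ -/
lemma eq_univ_of_stab (W : Finset M) (hW : W.Nonempty) (h : ∀ x : M, ∀ w ∈ W, w + x ∈ W) :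
    W = Finset.univ := by
  obtain ⟨w, hw⟩ := hW
  apply Finset.eq_univ_of_forall
  intro x
  have := h (x - w) w hw
  simpa using this

/-- key two-step growth: |Y + G + G| ≥ min |M| (|Y| + |G|) -/
lemma claim2 (Y G : Finset M) (hY : Y.Nonempty) (h0 : (0:M) ∈ G)
    (hgen : AddSubgroup.closure (G : Set M) = ⊤) (hk : 2 ≤ G.card) :
    min (Fintype.card M) (Y.card + G.card) ≤ (Y + G + G).card := by
  classical
  -- helper: saturated proper growth
  have key : ∀ W B : Finset M, W.Nonempty → B ⊆ G → (∀ b ∈ B, ∀ w ∈ W, w + b ∈ W) →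
      W ⊆ Y + G → Y.card + G.card ≤ W.card + B.card →
      min (Fintype.card M) (Y.card + G.card) ≤ (Y + G + G).card := by
    intro W B hWne hBG hstab hWsub hcard
    by_cases hfull : ∀ g ∈ G, ∀ w ∈ W, w + g ∈ W
    · -- W is univ
      have : W = Finset.univ := by
        apply eq_univ_of_stab W hWne
        intro x w hw
        have hx : x ∈ stabSub W := by
          have : AddSubgroup.closure (G : Set M) ≤ stabSub W := by
            rw [AddSubgroup.closure_le]
            intro g hg
            exact fun w hw => hfull g hg w hw
          rw [hgen] at this
          exact this (AddSubgroup.mem_top x)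
        exact hx w hw
      have hsub2 : W ⊆ Y + G + G := by
        intro w hw
        have h := Finset.add_mem_add (hWsub hw) h0
        rwa [add_zero] at h
      calc min (Fintype.card M) (Y.card + G.card) ≤ Fintype.card M := min_le_left _ _
        _ = W.card := by rw [this, Finset.card_univ]
        _ ≤ (Y + G + G).card := Finset.card_le_card hsub2
    · -- proper growth by a coset of stabilizer
      push_neg at hfull
      obtain ⟨g₀, hg₀, w₀, hw₀, hnot⟩ := hfull
      set H : Finset M := Finset.univ.filter (· ∈ stabSub W) with hH
      have hBH : B ⊆ H := fun b hb => by
        rw [hH, Finset.mem_filter]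
        exact ⟨Finset.mem_univ _, fun w hw => hstab b hb w hw⟩
      set z : M := w₀ + g₀ with hz
      have hzW : z ∉ W := hnot
      have hzcoset : ∀ h ∈ H, z + h ∈ W + G := by
        intro h hh
        rw [hH, Finset.mem_filter] at hh
        have : w₀ + h ∈ W := hh.2 w₀ hw₀
        have heq : z + h = (w₀ + h) + g₀ := by rw [hz]; abel
        rw [heq]
        exact Finset.add_mem_add this hg₀
      have hzdisj : ∀ h ∈ H, z + h ∉ W := by
        intro h hh hmem
        rw [hH, Finset.mem_filter] at hh
        have hneg : -h ∈ stabSub W := (stabSub W).neg_mem hh.2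
        have : (z + h) + -h ∈ W := hneg _ hmem
        simp only [add_neg_cancel_right] at this
        exact hzW this
      -- W ∪ (z +ᵥ H) ⊆ W + G, disjoint
      have hWsub' : W ⊆ W + G := by
        intro w hw
        rw [← add_zero w]
        exact Finset.add_mem_add hw h0
      have hunion : W ∪ H.image (z + ·) ⊆ W + G := by
        intro x hx
        rcases Finset.mem_union.1 hx with hx | hx
        · exact hWsub' hx
        · obtain ⟨h, hh, rfl⟩ := Finset.mem_image.1 hx
          exact hzcoset h hh
      have hdisj : Disjoint W (H.image (z + ·)) := by
        rw [Finset.disjoint_right]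
        intro x hx
        obtain ⟨h, hh, rfl⟩ := Finset.mem_image.1 hx
        exact hzdisj h hh
      have hcard2 : W.card + H.card ≤ (W + G).card := by
        have := Finset.card_le_card hunion
        rwa [Finset.card_union_of_disjoint hdisj,
          Finset.card_image_of_injective _ (add_right_injective z)] at this
      have hWGsub : W + G ⊆ Y + G + G := by
        intro x hx
        obtain ⟨w, hw, g, hg, rfl⟩ := Finset.mem_add.1 hx
        exact Finset.add_mem_add (hWsub hw) hg
      have hHB : B.card ≤ H.card := Finset.card_le_card hBH
      calc min (Fintype.card M) (Y.card + G.card) ≤ Y.card + G.card := min_le_right _ _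
        _ ≤ W.card + B.card := hcard
        _ ≤ W.card + H.card := by omega
        _ ≤ (W + G).card := hcard2
        _ ≤ (Y + G + G).card := Finset.card_le_card hWGsub
  -- main dichotomy application
  obtain ⟨A', B', hs, hc, hsub, h0', hne, hAsub, hfin⟩ :=
    dyson_core G.card G Y le_rfl hY h0
  rcases hfin with hcard1 | hclosed
  · -- branch 1 : |Y + G| ≥ |Y| + |G| - 1, redo on (Y+G, G)
    have hYG : Y.card + G.card - 1 ≤ (Y + G).card := by
      have hB'0 : B' = {0} := by
        obtain ⟨a, ha⟩ := Finset.card_eq_one.1 hcard1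
        rw [ha] at h0' ⊢
        rw [Finset.mem_singleton] at h0'
        rw [← h0']
      have : A' + B' = A' := by
        rw [hB'0, Finset.add_singleton]
        simp
      have hA'sub : A' ⊆ Y + G := this ▸ hs
      have := Finset.card_le_card hA'sub
      omega
    obtain ⟨A'', B'', hs2, hc2, hsub2, h0'', hne2, hAsub2, hfin2⟩ :=
      dyson_core G.card G (Y + G) le_rfl (hY.mono (by
        intro y hy
        rw [← add_zero y]
        exact Finset.add_mem_add hy h0)) h0
    rcases hfin2 with hcard2 | hclosed2
    · -- both branch 1
      have : (Y + G).card + G.card - 1 ≤ (Y + G + G).card := by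
        have hB'' : B'' = {0} := by
          obtain ⟨a, ha⟩ := Finset.card_eq_one.1 hcard2
          rw [ha] at h0'' ⊢
          rw [Finset.mem_singleton] at h0''
          rw [← h0'']
        have : A'' + B'' = A'' := by rw [hB'', Finset.add_singleton]; simp
        have hA''sub : A'' ⊆ Y + G + G := this ▸ hs2
        have := Finset.card_le_card hA''sub
        omega
      have := min_le_right (Fintype.card M) (Y.card + G.card)
      omega
    · -- branch 2 on second step
      by_cases hB''G : B'' = G
      · -- G itself closed on A'': A'' is univ
        have hstabA : ∀ x : M, ∀ a ∈ A'', a + x ∈ A'' := by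
          intro x a ha
          have hx : x ∈ stabSub A'' := by
            have : AddSubgroup.closure (G : Set M) ≤ stabSub A'' := by
              rw [AddSubgroup.closure_le]
              intro g hg a' ha'
              exact hclosed2 g (hB''G ▸ hg) a' ha'
            rw [hgen] at this
            exact this (AddSubgroup.mem_top x)
          exact hx a ha
        have hA''univ : A'' = Finset.univ := eq_univ_of_stab A'' hne2 hstabA
        have hA''sub : A'' ⊆ Y + G + G := by
          have : A'' + B'' ⊆ Y + G + G := hs2
          intro a ha
          have : a + 0 ∈ A'' + B'' := Finset.add_mem_add ha h0''
          rw [add_zero] at this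
          exact hs2 this
        calc min (Fintype.card M) (Y.card + G.card) ≤ Fintype.card M := min_le_left _ _
          _ = A''.card := by rw [hA''univ, Finset.card_univ]
          _ ≤ (Y + G + G).card := Finset.card_le_card hA''sub
      · -- B'' proper subset of G : use key with W := A''
        have hB''card : B''.card < G.card := by
          apply Finset.card_lt_card
          exact ⟨hsub2, fun h => hB''G (Finset.Subset.antisymm hsub2 h)⟩
        have hA''sub : A'' ⊆ Y + G + G := by
          intro a ha
          have : a + 0 ∈ A'' + B'' := Finset.add_mem_add ha h0''
          rw [add_zero] at this
          exact hs2 this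
        -- here key is for (Y+G) in role of Y with target (Y+G)+G... need direct count
        have hstab := hclosed2
        -- mimic key: coset growth inside A''
        -- simpler: A'' already has enough cards
        have : Y.card + G.card ≤ A''.card := by
          have := Finset.card_le_card hsub2  -- B'' ⊆ G
          omega
        calc min (Fintype.card M) (Y.card + G.card) ≤ Y.card + G.card := min_le_right _ _
          _ ≤ A''.card := this
          _ ≤ (Y + G + G).card := Finset.card_le_card hA''sub
  · -- branch 2 on first step
    by_cases hB'G : B' = G
    · have hstabA : ∀ x : M, ∀ a ∈ A', a + x ∈ A' := by
        intro x a ha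
        have hx : x ∈ stabSub A' := by
          have : AddSubgroup.closure (G : Set M) ≤ stabSub A' := by
            rw [AddSubgroup.closure_le]
            intro g hg a' ha'
            exact hclosed g (hB'G ▸ hg) a' ha'
          rw [hgen] at this
          exact this (AddSubgroup.mem_top x)
        exact hx a ha
      have hA'univ : A' = Finset.univ := eq_univ_of_stab A' hne hstabA
      have hA'sub : A' ⊆ Y + G := by
        intro a ha
        have : a + 0 ∈ A' + B' := Finset.add_mem_add ha h0'
        rw [add_zero] at this
        exact hs this
      have hsub3 : Y + G ⊆ Y + G + G := by
        intro x hx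
        rw [← add_zero x]
        exact Finset.add_mem_add hx h0
      calc min (Fintype.card M) (Y.card + G.card) ≤ Fintype.card M := min_le_left _ _
        _ = A'.card := by rw [hA'univ, Finset.card_univ]
        _ ≤ (Y + G + G).card := Finset.card_le_card (hA'sub.trans hsub3)
    · have hA'sub : A' ⊆ Y + G := by
        intro a ha
        have : a + 0 ∈ A' + B' := Finset.add_mem_add ha h0'
        rw [add_zero] at this
        exact hs this
      exact key A' B' hne hsub (fun b hb a ha => hclosed b hb a ha) hA'sub (by omega)


/-- iterated sumsets -/
def iterAdd (G : Finset M) : ℕ → Finset M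
  | 0 => {0}
  | (t+1) => iterAdd G t + G

lemma zero_mem_iterAdd (G : Finset M) (h0 : (0:M) ∈ G) (t : ℕ) : (0:M) ∈ iterAdd G t := by
  induction t with
  | zero => simp [iterAdd]
  | succ t ih =>
    have := Finset.add_mem_add ih h0
    rwa [add_zero] at this

lemma iterAdd_nonempty (G : Finset M) (h0 : (0:M) ∈ G) (t : ℕ) : (iterAdd G t).Nonempty :=
  ⟨0, zero_mem_iterAdd G h0 t⟩

lemma iterAdd_card (G : Finset M) (h0 : (0:M) ∈ G)
    (hgen : AddSubgroup.closure (G : Set M) = ⊤) (hk : 2 ≤ G.card) (s : ℕ) :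
    min (Fintype.card M) ((s+1) * G.card) ≤ (iterAdd G (2*s+1)).card := by
  induction s with
  | zero =>
    have h1 : iterAdd G (2*0+1) = G := by
      show iterAdd G 0 + G = G
      ext a
      simp [iterAdd, Finset.mem_add]
    rw [h1]
    simpa using min_le_right (Fintype.card M) G.card
  | succ s ih =>
    have heq : iterAdd G (2*(s+1)+1) = iterAdd G (2*s+1) + G + G := by
      have h1 : 2*(s+1)+1 = (2*s+1) + 1 + 1 := by ring
      rw [h1]
      rfl
    rw [heq]
    have h2 := claim2 (iterAdd G (2*s+1)) G (iterAdd_nonempty G h0 _) h0 hgen hk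
    rcases le_or_gt (Fintype.card M) ((s+1) * G.card) with h | h
    · rw [min_eq_left h] at ih
      have h4 : min (Fintype.card M) ((iterAdd G (2*s+1)).card + G.card) = Fintype.card M :=
        min_eq_left (by omega)
      rw [h4] at h2
      exact le_trans (min_le_left _ _) h2
    · rw [min_eq_right h.le] at ih
      refine le_trans (le_min (min_le_left _ _) ?_) h2
      have hexp : (s+1+1) * G.card = (s+1)*G.card + G.card := by ring
      refine le_trans (min_le_right _ _) ?_
      rw [hexp]
      exact Nat.add_le_add_right ih _

/-- THE COVERAGE THEOREM: every element is a sum of at most 2⌊|M|/k⌋ elements of G -/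
theorem coverage (G : Finset M) (h0 : (0:M) ∈ G)
    (hgen : AddSubgroup.closure (G : Set M) = ⊤) (hk : 2 ≤ G.card) (c : M) :
    c ∈ iterAdd G (2 * (Fintype.card M / G.card)) := by
  set k := G.card with hkdef
  set m := Fintype.card M with hmdef
  have hkm : k ≤ m := by
    rw [hkdef, hmdef, ← Finset.card_univ]
    exact Finset.card_le_card (Finset.subset_univ G)
  set q := m / k with hq
  have hq1 : 1 ≤ q := by
    rw [hq]
    exact Nat.one_le_div_iff (by omega) |>.2 hkm
  -- |iter (2q-1)| ≥ min m (q*k)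
  have h2q1 : 2*q - 1 = 2*(q-1)+1 := by omega
  have hbig := iterAdd_card G h0 hgen hk (q-1)
  have hqk : (q-1+1) * k = q * k := by
    congr 1; omega
  rw [hqk] at hbig
  -- pigeonhole: X = iter (2q-1), Z = image (c - ·) G
  set X := iterAdd G (2*(q-1)+1) with hX
  set Z := G.image (fun g => c - g) with hZ
  have hZcard : Z.card = k := by
    rw [hZ]
    apply Finset.card_image_of_injective
    intro a b hab
    have : c - a = c - b := hab
    have := sub_right_injective this
    exact this
  have hXcard : min m (q * k) ≤ X.card := hbig
  -- q*k > m - k i.e. q*k + k ≥ m + 1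
  have hdiv : m < (q+1) * k := by
    have h1 := Nat.div_add_mod m k
    have h2 : m % k < k := Nat.mod_lt _ (by omega)
    calc m = k * q + m % k := by rw [hq]; omega
      _ < k * q + k := by omega
      _ = (q+1) * k := by ring
  have hinter : (X ∩ Z).Nonempty := by
    rcases le_or_gt (q*k) m with h | h
    · -- min = q*k
      have hX' : q * k ≤ X.card := by
        rw [min_eq_right h] at hXcard
        exact hXcard
      have hcards : m < X.card + Z.card := by
        rw [hZcard]
        calc m < (q+1) * k := hdiv
          _ = q*k + k := by ring
          _ ≤ X.card + k := Nat.add_le_add_right hX' _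
      have h1 : (X ∪ Z).card ≤ m := by
        rw [hmdef, ← Finset.card_univ]
        exact Finset.card_le_card (Finset.subset_univ _)
      have h2 := Finset.card_union_add_card_inter X Z
      rw [← Finset.card_pos]
      omega
    · have hX' : m ≤ X.card := by
        rw [min_eq_left h.le] at hXcard
        exact hXcard
      have hXle : X.card ≤ Fintype.card M := by
        rw [← Finset.card_univ]
        exact Finset.card_le_card (Finset.subset_univ _)
      have hXuniv : X = Finset.univ := Finset.eq_univ_of_card X
        (le_antisymm hXle (hmdef ▸ hX'))
      have : c - 0 ∈ Z := by
        rw [hZ]; exact Finset.mem_image_of_mem _ h0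
      refine ⟨c - 0, ?_⟩
      rw [Finset.mem_inter, hXuniv]
      exact ⟨Finset.mem_univ _, this⟩
  obtain ⟨y, hy⟩ := hinter
  rw [Finset.mem_inter] at hy
  obtain ⟨g, hg, hgy⟩ := Finset.mem_image.1 (hZ ▸ hy.2)
  have hcy : c = y + g := by rw [← hgy]; abel
  have h2q : 2 * q = (2*(q-1)+1) + 1 := by omega
  rw [h2q]
  show c ∈ iterAdd G (2*(q-1)+1) + G
  rw [hcy]
  exact Finset.add_mem_add (hX ▸ hy.1) hg


/-- gcd bezout membership -/
lemma gcd_mem_closure {m : ℕ} [NeZero m] (H : AddSubgroup (ZMod m)) (x y : ℕ)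
    (hx : ((x:ℕ) : ZMod m) ∈ H) (hy : ((y:ℕ) : ZMod m) ∈ H) :
    ((Nat.gcd x y : ℕ) : ZMod m) ∈ H := by
  have hbez := Nat.gcd_eq_gcd_ab x y
  have hcast : ((Nat.gcd x y : ℕ) : ZMod m) =
      (Nat.gcdA x y) • ((x:ℕ) : ZMod m) + (Nat.gcdB x y) • ((y:ℕ) : ZMod m) := by
    have h2 := congrArg (fun z : ℤ => ((z : ℤ) : ZMod m)) hbez
    simp only [zsmul_eq_mul]
    push_cast at h2 ⊢
    rw [h2]
    ring
  rw [hcast]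
  exact H.add_mem (H.zsmul_mem hx _) (H.zsmul_mem hy _)


/-- gcd over a finset lands in any subgroup containing the generators -/
lemma finset_gcd_mem_closure {m : ℕ} [NeZero m] (α : ℕ → ℕ) (H : AddSubgroup (ZMod m))
    (s : Finset ℕ) (h : ∀ j ∈ s, ((α j : ℕ) : ZMod m) ∈ H) :
    ((s.gcd α : ℕ) : ZMod m) ∈ H := by
  classical
  induction s using Finset.induction with
  | empty => simpa using H.zero_mem
  | @insert a s ha ih =>
    rw [Finset.gcd_insert]
    have h1 : ((α a : ℕ) : ZMod m) ∈ H := h a (Finset.mem_insert_self a s)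
    have h2 := ih (fun j hj => h j (Finset.mem_insert_of_mem hj))
    exact gcd_mem_closure H _ _ h1 h2


end EGAbstract



namespace ProjMonomialCurve

/-- The numerical semigroup generated by `a 1, …, a k` (equivalently by `A₁ = {0,a 1,…,a k}`). -/
def S1 (k : ℕ) (a : ℕ → ℕ) : Set ℕ :=
  {n | ∃ x : ℕ → ℕ, n = ∑ i ∈ Finset.Icc 1 k, x i * a i}

/-- The numerical semigroup generated by the nonzero elements `d - a i` (`0 ≤ i ≤ k-1`)
of `A₂`, where `d = a k`. -/
def S2 (k : ℕ) (a : ℕ → ℕ) : Set ℕ :=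
  {n | ∃ x : ℕ → ℕ, n = ∑ i ∈ Finset.range k, x i * (a k - a i)}

/-- `δ₁ n`: least total number of summands over representations `n = ∑ xᵢ aᵢ`. -/
noncomputable def delta1 (k : ℕ) (a : ℕ → ℕ) (n : ℕ) : ℕ :=
  sInf {m | ∃ x : ℕ → ℕ, n = ∑ i ∈ Finset.Icc 1 k, x i * a i ∧ m = ∑ i ∈ Finset.Icc 1 k, x i}

/-- `δ₂ n`: least total number of summands over representations of `n` by the
nonzero elements of `A₂`. -/
noncomputable def delta2 (k : ℕ) (a : ℕ → ℕ) (n : ℕ) : ℕ :=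
  sInf {m | ∃ x : ℕ → ℕ,
    n = ∑ i ∈ Finset.range k, x i * (a k - a i) ∧ m = ∑ i ∈ Finset.range k, x i}

/-- `ω₁ i`: the least element of `S₍₁₎` congruent to `i` modulo `d = a k`. -/
noncomputable def omega1 (k : ℕ) (a : ℕ → ℕ) (i : ℕ) : ℕ :=
  sInf {n | n ∈ S1 k a ∧ n % a k = i % a k}

/-- `ω₂ i`: the least element of `S₍₂₎` congruent to `i` modulo `d = a k`. -/
noncomputable def omega2 (k : ℕ) (a : ℕ → ℕ) (i : ℕ) : ℕ :=
  sInf {n | n ∈ S2 k a ∧ n % a k = i % a k}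

/-- `w i = (ω₁(i), ω₂(d-i))`. -/
noncomputable def w (k : ℕ) (a : ℕ → ℕ) (i : ℕ) : ℕ × ℕ :=
  (omega1 k a i, omega2 k a (a k - i))

/-- `e h = (h, d - h)`. -/
def e (k : ℕ) (a : ℕ → ℕ) (h : ℕ) : ℕ × ℕ := (h, a k - h)

/-- The affine semigroup `S ⊆ ℕ²` generated by `e (a 0), …, e (a k)`. -/
def S (k : ℕ) (a : ℕ → ℕ) : Set (ℕ × ℕ) :=
  {u | ∃ x : ℕ → ℕ, u = ∑ i ∈ Finset.range (k+1), x i • e k a (a i)}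

/-- `S' = {u ∈ ℕ² | u + p•e₀ ∈ S and u + p•e_d ∈ S for some p ∈ ℕ}`. -/
def S' (k : ℕ) (a : ℕ → ℕ) : Set (ℕ × ℕ) :=
  {u | ∃ p : ℕ, u + p • e k a 0 ∈ S k a ∧ u + p • e k a (a k) ∈ S k a}

/-- `deg u = (u₁ + u₂)/d` for `u ∈ ℕ²`. -/
def deg (k : ℕ) (a : ℕ → ℕ) (u : ℕ × ℕ) : ℕ := (u.1 + u.2) / a k

/-- The index set `𝕀`. -/
noncomputable def II (k : ℕ) (a : ℕ → ℕ) : Set ℕ :=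
  {i | 1 ≤ i ∧ i ≤ a k - 1 ∧ (∀ j, 1 ≤ j → j ≤ k - 1 → i ≠ a j) ∧
    deg k a (w k a i) < delta1 k a (w k a i).1}

/-- `T = {u ∈ ℤ² | d ∣ u₁+u₂, u₁ ∉ S₍₁₎, u₂ ∉ S₍₂₎}`. -/
def T (k : ℕ) (a : ℕ → ℕ) : Set (ℤ × ℤ) :=
  {u | (a k : ℤ) ∣ u.1 + u.2 ∧ (∀ n ∈ S1 k a, (n : ℤ) ≠ u.1) ∧ (∀ n ∈ S2 k a, (n : ℤ) ≠ u.2)}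

/-- `deg` for integer points. -/
def degZ (k : ℕ) (a : ℕ → ℕ) (u : ℤ × ℤ) : ℤ := (u.1 + u.2) / (a k : ℤ)

/-- The Castelnuovo–Mumford regularity, expressed combinatorially:
`max({deg u + 1 : u ∈ S'∖S} ∪ {deg u + 2 : u ∈ T})`. -/
noncomputable def reg (k : ℕ) (a : ℕ → ℕ) : ℤ :=
  sSup ({z : ℤ | ∃ u ∈ S' k a \ S k a, z = (deg k a u : ℤ) + 1} ∪
        {z : ℤ | ∃ u ∈ T k a, z = degZ k a u + 2})

/-- Frobenius number of `S₍₁₎` (greatest integer not in it; `-1` if the semigroup is all of `ℕ`). -/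
noncomputable def F1 (k : ℕ) (a : ℕ → ℕ) : ℤ :=
  sSup {z : ℤ | ∀ n ∈ S1 k a, (n : ℤ) ≠ z}

/-- Frobenius number of `S₍₂₎`. -/
noncomputable def F2 (k : ℕ) (a : ℕ → ℕ) : ℤ :=
  sSup {z : ℤ | ∀ n ∈ S2 k a, (n : ℤ) ≠ z}

/-- The largest gap `λ_max = max_{1 ≤ i ≤ k} (a i - a (i-1) - 1)`. -/
def lamMax (k : ℕ) (a : ℕ → ℕ) : ℕ :=
  (Finset.Icc 1 k).sup (fun i => a i - a (i-1) - 1)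

/-- The second largest gap: the minimum over `i` of the largest gap among indices `≠ i`. -/
noncomputable def lamSl (k : ℕ) (a : ℕ → ℕ) : ℕ :=
  sInf {m | ∃ i, 1 ≤ i ∧ i ≤ k ∧
    m = ((Finset.Icc 1 k).erase i).sup (fun j => a j - a (j-1) - 1)}

/-- The set `A₁ = {a 0, a 1, …, a k}`. -/
def A1set (k : ℕ) (a : ℕ → ℕ) : Set ℕ := {m | ∃ j ≤ k, a j = m}



section MainAux

variable {k : ℕ} {α : ℕ → ℕ}

/-- a representation -/
def Rep (k : ℕ) (α : ℕ → ℕ) (n C : ℕ) : Prop :=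
  ∃ x : ℕ → ℕ, n = ∑ i ∈ Finset.Icc 1 k, x i * α i ∧ C = ∑ i ∈ Finset.Icc 1 k, x i

lemma rep_zero : Rep k α 0 0 := ⟨fun _ => 0, by simp⟩

lemma rep_add {n C n' C'} (h : Rep k α n C) (h' : Rep k α n' C') :
    Rep k α (n + n') (C + C') := by
  obtain ⟨x, hx1, hx2⟩ := h
  obtain ⟨y, hy1, hy2⟩ := h'
  exact ⟨x + y, by
    simp only [Pi.add_apply, add_mul, Finset.sum_add_distrib, hx1, hy1], by
    simp only [Pi.add_apply, Finset.sum_add_distrib, hx2, hy2]⟩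

lemma rep_gen {j : ℕ} (h1 : 1 ≤ j) (h2 : j ≤ k) : Rep k α (α j) 1 := by
  refine ⟨fun i => if i = j then 1 else 0, ?_, ?_⟩
  · rw [Finset.sum_congr rfl (fun i _ => ?_)]
    · rw [Finset.sum_ite_eq' (Finset.Icc 1 k) j (fun i => α i),
        if_pos (Finset.mem_Icc.2 ⟨h1, h2⟩)]
    · show (if i = j then 1 else 0) * α i = if i = j then α i else 0
      split_ifs with h
      · rw [one_mul]
      · rw [zero_mul]
  · rw [Finset.sum_ite_eq' (Finset.Icc 1 k) j (fun _ => 1),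
      if_pos (Finset.mem_Icc.2 ⟨h1, h2⟩)]

lemma rep_alpha1_mul (hk : 1 ≤ k) (t : ℕ) : Rep k α (t * α 1) t := by
  induction t with
  | zero => simpa using rep_zero
  | succ t ih =>
    have := rep_add ih (rep_gen le_rfl hk)
    rwa [show t * α 1 + α 1 = (t+1) * α 1 by ring] at this

lemma S1_iff_rep {n : ℕ} : n ∈ S1 k α ↔ ∃ C, Rep k α n C := by
  constructor
  · rintro ⟨x, hx⟩
    exact ⟨_, x, hx, rfl⟩
  · rintro ⟨C, x, hx, -⟩
    exact ⟨x, hx⟩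

lemma delta1_le {n C : ℕ} (h : Rep k α n C) : delta1 k α n ≤ C := by
  obtain ⟨x, h1, h2⟩ := h
  exact Nat.sInf_le ⟨x, h1, h2⟩

section WithHyp

variable (hk : 2 ≤ k) (hα0 : α 0 = 0) (hpos : 0 < α 1)
    (hmono : ∀ i, 1 ≤ i → i < k → α i < α (i+1))

include hmono in
lemma alpha_mono : ∀ i j, 1 ≤ i → i ≤ j → j ≤ k → α i ≤ α j := by
  intro i j h1 hij hjk
  induction j, hij using Nat.le_induction with
  | base => exact le_rfl
  | succ n hn ih =>
    exact le_trans (ih (by omega)) (le_of_lt (hmono n (le_trans h1 hn) (by omega)))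

include hpos hmono in
lemma count_le_div {n C : ℕ} (h : Rep k α n C) : C ≤ n / α 1 := by
  obtain ⟨x, h1, h2⟩ := h
  rw [Nat.le_div_iff_mul_le hpos]
  calc C * α 1 = ∑ i ∈ Finset.Icc 1 k, x i * α 1 := by rw [h2, Finset.sum_mul]
    _ ≤ ∑ i ∈ Finset.Icc 1 k, x i * α i := by
        apply Finset.sum_le_sum
        intro i hi
        rw [Finset.mem_Icc] at hi
        exact Nat.mul_le_mul_left _ (alpha_mono hmono 1 i le_rfl hi.1 hi.2)
    _ = n := h1.symm

include hα0 in
lemma lam_ge (hk1 : 1 ≤ k) : α 1 - 1 ≤ lamMax k α := by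
  have := Finset.le_sup (f := fun i => α i - α (i-1) - 1)
    (Finset.mem_Icc.2 ⟨le_rfl, hk1⟩ : 1 ∈ Finset.Icc 1 k)
  simpa [hα0, lamMax] using this

include hα0 hpos hmono in
lemma net {v : ℕ} (hv : v ≤ α k) (hk1 : 1 ≤ k) :
    ∃ j, j ≤ k ∧ α j ≤ v ∧ v ≤ α j + lamMax k α := by
  classical
  set J := (Finset.Icc 0 k).filter (fun j => α j ≤ v) with hJ
  have hJne : J.Nonempty := ⟨0, by
    rw [hJ, Finset.mem_filter]
    exact ⟨Finset.mem_Icc.2 ⟨le_rfl, Nat.zero_le _⟩, by rw [hα0]; exact Nat.zero_le _⟩⟩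
  obtain ⟨j, hjmem, hjmax⟩ : ∃ j ∈ J, ∀ i ∈ J, i ≤ j := by
    refine ⟨J.max' hJne, Finset.max'_mem _ _, fun i hi => Finset.le_max' J i hi⟩
  rw [hJ, Finset.mem_filter, Finset.mem_Icc] at hjmem
  obtain ⟨⟨-, hjk⟩, hjv⟩ := hjmem
  rcases eq_or_lt_of_le hjk with rfl | hjk'
  · exact ⟨j, le_rfl, hjv, le_trans hv (Nat.le_add_right _ _)⟩
  · refine ⟨j, hjk, hjv, ?_⟩
    have hnotin : ¬ (α (j+1) ≤ v) := by
      intro hcon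
      have hmem : (j+1) ∈ J := by
        rw [hJ, Finset.mem_filter]
        exact ⟨Finset.mem_Icc.2 ⟨Nat.zero_le _, hjk'⟩, hcon⟩
      have := hjmax _ hmem
      omega
    push_neg at hnotin
    have hgap : α (j+1) - α j - 1 ≤ lamMax k α := by
      have hmem : (j+1) ∈ Finset.Icc 1 k := Finset.mem_Icc.2 ⟨by omega, hjk'⟩
      have := Finset.le_sup (f := fun i => α i - α (i-1) - 1) hmem
      simpa [lamMax] using this
    omega

end WithHyp


end MainAux

section Cover

variable {k : ℕ} {α : ℕ → ℕ}
variable (hk : 2 ≤ k) (hα0 : α 0 = 0) (hpos : 0 < α 1)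
    (hmono : ∀ i, 1 ≤ i → i < k → α i < α (i+1))
    (hgcd : (Finset.Icc 1 k).gcd α = 1)
    (hmod : ∀ i j, 1 ≤ i → i < j → j ≤ k → α i % α 1 ≠ α j % α 1)

include hk hα0 hpos hmono hgcd hmod in
lemma cover_nat (c : ℕ) : ∃ z, (∃ C, Rep k α z C) ∧ z % α 1 = c % α 1 ∧
    z ≤ 2 * (α 1 / k) * α k := by
  classical
  haveI : NeZero (α 1) := ⟨hpos.ne'⟩
  set G : Finset (ZMod (α 1)) := (Finset.Icc 1 k).image (fun j => ((α j : ℕ) : ZMod (α 1)))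
    with hG
  have h0 : (0 : ZMod (α 1)) ∈ G := by
    rw [hG, Finset.mem_image]
    exact ⟨1, Finset.mem_Icc.2 ⟨le_rfl, by omega⟩, by simp⟩
  have hinj : Set.InjOn (fun j => ((α j : ℕ) : ZMod (α 1))) (Finset.Icc 1 k) := by
    intro i hi j hj hij
    simp only [Finset.coe_Icc, Set.mem_Icc] at hi hj
    have hmd : α i % α 1 = α j % α 1 := (ZMod.natCast_eq_natCast_iff _ _ _).mp hij
    rcases lt_trichotomy i j with h | h | h
    · exact absurd hmd (hmod i j hi.1 h hj.2)
    · exact h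
    · exact absurd hmd.symm (hmod j i hj.1 h hi.2)
  have hcard : G.card = k := by
    rw [hG, Finset.card_image_of_injOn hinj, Nat.card_Icc]
    omega
  have hgen : AddSubgroup.closure (G : Set (ZMod (α 1))) = ⊤ := by
    have h1mem : ((1:ℕ) : ZMod (α 1)) ∈ AddSubgroup.closure (G : Set (ZMod (α 1))) := by
      have := finset_gcd_mem_closure α (AddSubgroup.closure (G : Set (ZMod (α 1))))
        (Finset.Icc 1 k) (fun j hj => AddSubgroup.subset_closure (by
          rw [hG]
          exact Finset.mem_coe.2 (Finset.mem_image_of_mem _ hj)))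
      rwa [hgcd] at this
    rw [eq_top_iff]
    intro x _
    have hx : (ZMod.val x) • ((1:ℕ) : ZMod (α 1)) = x := by
      rw [Nat.cast_one, nsmul_eq_mul, mul_one]
      exact ZMod.natCast_rightInverse x
    rw [← hx]
    exact AddSubgroup.nsmul_mem _ h1mem _
  have hiter : ∀ t : ℕ, ∀ c' : ZMod (α 1), c' ∈ iterAdd G t →
      ∃ z C, Rep k α z C ∧ z ≤ t * α k ∧ ((z:ℕ) : ZMod (α 1)) = c' := by
    intro t
    induction t with
    | zero =>
      intro c' hc'
      rw [iterAdd, Finset.mem_singleton] at hc'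
      exact ⟨0, 0, rep_zero, by simp, by rw [hc']; simp⟩
    | succ t ih =>
      intro c' hc'
      rw [iterAdd] at hc'
      obtain ⟨y, hy, g, hg, rfl⟩ := Finset.mem_add.1 hc'
      rw [hG, Finset.mem_image] at hg
      obtain ⟨j, hj, rfl⟩ := hg
      rw [Finset.mem_Icc] at hj
      obtain ⟨z, C, hrep, hle, hcast⟩ := ih y hy
      refine ⟨z + α j, C + 1, rep_add hrep (rep_gen hj.1 hj.2), ?_, ?_⟩
      · have hαj : α j ≤ α k := alpha_mono hmono j k hj.1 hj.2 le_rfl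
        calc z + α j ≤ t * α k + α k := Nat.add_le_add hle hαj
          _ = (t+1) * α k := by ring
      · push_cast
        rw [hcast]
  have hcval := coverage G h0 hgen (by omega) ((c:ℕ) : ZMod (α 1))
  rw [hcard, ZMod.card (α 1)] at hcval
  obtain ⟨z, C, hrep, hle, hcast⟩ := hiter _ _ hcval
  refine ⟨z, ⟨C, hrep⟩, ?_, ?_⟩
  · exact (ZMod.natCast_eq_natCast_iff _ _ _).mp hcast
  · calc z ≤ 2 * (α 1 / k) * α k := hle

end Cover

theorem statement_17 (k : ℕ) (α : ℕ → ℕ) (hk : 2 ≤ k) (hα0 : α 0 = 0) (hpos : 0 < α 1)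
    (hmono : ∀ i, 1 ≤ i → i < k → α i < α (i+1))
    (hgcd : (Finset.Icc 1 k).gcd α = 1)
    (hmod : ∀ i j, 1 ≤ i → i < j → j ≤ k → α i % α 1 ≠ α j % α 1) :
    ∀ i, 1 ≤ i → i ≤ α k - 1 →
      delta1 k α (omega1 k α i) ≤ 1 + (2 * α k * (α 1 / k) + lamMax k α) / α 1 ∧
      (1 + (((2 * α k * (α 1 / k) + lamMax k α) / α 1 : ℕ) : ℚ)) ≤
        1 + 2 * (α k : ℚ) / (k : ℚ) + (lamMax k α : ℚ) / (α 1 : ℚ) := by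
  intro i hi1 hi2
  have hd1 : 0 < α k :=
    lt_of_lt_of_le hpos (alpha_mono hmono 1 k le_rfl (by omega) le_rfl)
  have horder : 2 * α k * (α 1 / k) = 2 * (α 1 / k) * α k := by ring
  have hthresh : ∀ n : ℕ, 2 * (α 1 / k) * α k ≤ n → (∃ C, Rep k α n C) := by
    intro n hn
    obtain ⟨z, ⟨C, hrep⟩, hzmod, hzle⟩ := cover_nat hk hα0 hpos hmono hgcd hmod n
    have hzn : z ≤ n := le_trans hzle hn
    have hdvd : α 1 ∣ n - z := (Nat.modEq_iff_dvd' hzn).mp hzmod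
    obtain ⟨t, ht⟩ := hdvd
    have hn' : n = z + t * α 1 := by rw [mul_comm]; omega
    exact ⟨C + t, hn' ▸ rep_add hrep (rep_alpha1_mul (by omega) t)⟩
  have hTmem : (2 * (α 1 / k) * α k + i) ∈
      {n | n ∈ S1 k α ∧ n % α k = i % α k} := by
    refine ⟨S1_iff_rep.mpr (hthresh _ (Nat.le_add_right _ _)), ?_⟩
    show (2 * (α 1 / k) * α k + i) % α k = i % α k
    rw [add_comm]
    exact Nat.add_mul_mod_self_right i (2 * (α 1 / k)) (α k)
  have hωmem : omega1 k α i ∈ {n | n ∈ S1 k α ∧ n % α k = i % α k} :=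
    Nat.sInf_mem ⟨_, hTmem⟩
  have hωle : omega1 k α i ≤ 2 * (α 1 / k) * α k + i := Nat.sInf_le hTmem
  obtain ⟨hωS1, hωmod⟩ := hωmem
  constructor
  · -- the δ bound
    rcases le_or_gt (omega1 k α i) (2 * (α 1 / k) * α k + lamMax k α) with hcase | hcase
    · obtain ⟨C, hrep⟩ := S1_iff_rep.1 hωS1
      have h1 := delta1_le hrep
      have h2 := count_le_div hpos hmono hrep
      have h3 : omega1 k α i / α 1 ≤ (2 * (α 1 / k) * α k + lamMax k α) / α 1 :=
        Nat.div_le_div_right hcase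
      rw [horder]
      omega
    · have hωub : omega1 k α i ≤ 2 * (α 1 / k) * α k + α k - 1 := by omega
      have hvle : omega1 k α i - 2 * (α 1 / k) * α k ≤ α k := by omega
      obtain ⟨j, hjk, hjle, hjub⟩ := net hα0 hpos hmono hvle (by omega)
      have hj1 : 1 ≤ j := by
        rcases Nat.eq_zero_or_pos j with h | h
        · rw [h, hα0] at hjle hjub
          omega
        · exact h
      have hαjω : α j ≤ omega1 k α i := le_trans hjle (by omega)
      have hm1 : 2 * (α 1 / k) * α k ≤ omega1 k α i - α j := by omega
      have hm2 : omega1 k α i - α j ≤ 2 * (α 1 / k) * α k + lamMax k α := by omega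
      obtain ⟨C, hrepm⟩ := hthresh (omega1 k α i - α j) hm1
      have hrepω : Rep k α (omega1 k α i) (C + 1) := by
        have := rep_add hrepm (rep_gen hj1 hjk)
        rwa [Nat.sub_add_cancel hαjω] at this
      have h1 := delta1_le hrepω
      have h2 := count_le_div hpos hmono hrepm
      have h3 : (omega1 k α i - α j) / α 1 ≤
          (2 * (α 1 / k) * α k + lamMax k α) / α 1 := Nat.div_le_div_right hm2
      rw [horder]
      omega
  · -- the ℚ bound
    have hk0 : (0:ℚ) < (k:ℚ) := by exact_mod_cast (by omega : 0 < k)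
    have hα10 : (0:ℚ) < (α 1:ℚ) := by exact_mod_cast hpos
    have hcast : (((2 * α k * (α 1 / k) + lamMax k α) / α 1 : ℕ) : ℚ) ≤
        ((2 * α k * (α 1 / k) + lamMax k α : ℕ) : ℚ) / ((α 1 : ℕ) : ℚ) := Nat.cast_div_le
    have hnum : ((2 * α k * (α 1 / k) + lamMax k α : ℕ) : ℚ) =
        2 * (α k : ℚ) * ((α 1 / k : ℕ) : ℚ) + (lamMax k α : ℚ) := by push_cast; ring
    have hqq : ((α 1 / k : ℕ) : ℚ) * (k:ℚ) ≤ ((α 1:ℕ) : ℚ) := by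
      exact_mod_cast Nat.div_mul_le_self (α 1) k
    have h2 : (2 * (α k:ℚ) * ((α 1 / k : ℕ) : ℚ) + (lamMax k α:ℚ)) / ((α 1:ℕ):ℚ) =
        2 * (α k:ℚ) * ((α 1 / k : ℕ) : ℚ) / ((α 1:ℕ):ℚ) + (lamMax k α:ℚ)/((α 1:ℕ):ℚ) :=
      add_div _ _ _
    have h3 : 2 * (α k:ℚ) * ((α 1 / k : ℕ) : ℚ) / ((α 1:ℕ):ℚ) ≤ 2 * (α k:ℚ) / (k:ℚ) := by
      rw [div_le_div_iff₀ hα10 hk0]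
      have hαk0 : (0:ℚ) ≤ 2 * (α k:ℚ) := by positivity
      calc 2 * (α k:ℚ) * ((α 1 / k : ℕ) : ℚ) * (k:ℚ)
          = 2 * (α k:ℚ) * (((α 1 / k : ℕ) : ℚ) * (k:ℚ)) := by ring
        _ ≤ 2 * (α k:ℚ) * ((α 1:ℕ):ℚ) := mul_le_mul_of_nonneg_left hqq hαk0
    rw [hnum] at hcast
    rw [h2] at hcast
    linarith


end ProjMonomialCurve
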